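/- Under the PWGCO model, the trace of the inverse of the block-diagonal moment matrix M(ξ_0) = diag(1, I_1+V_1/3, ..., I_{n_G}+V_{n_G}/3) equals 1 + ∑_{g=1}^{n_G} 3|G_g|(|G_g|−1)^2 / (2(|G_g|+1)). -/

import Mathlib

/-- Index type of the within-group pairs `{i < j}` (both components in a common group). -/
abbrev GPair {m n : ℕ} (G : Fin n → Finset (Fin m)) :=
  {p : Fin m × Fin m // p.1 < p.2 ∧ ∃ g, p.1 ∈ G g ∧ p.2 ∈ G g}

/-- The moment matrix `M(ξ₀) = diag(1, I₁+V₁/3, …, I_{n_G}+V_{n_G}/3)` under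
the PWGCO model. -/
noncomputable def Mmom {m n : ℕ} (G : Fin n → Finset (Fin m)) :
    Matrix (Unit ⊕ GPair G) (Unit ⊕ GPair G) ℝ := fun a b =>
  match a, b with
  | Sum.inl _, Sum.inl _ => 1
  | Sum.inl _, Sum.inr _ => 0
  | Sum.inr _, Sum.inl _ => 0
  | Sum.inr p, Sum.inr q =>
      if p = q then 1
      else if p.1.1 = q.1.1 ∨ p.1.2 = q.1.2 then 1 / 3
      else if p.1.2 = q.1.1 ∨ p.1.1 = q.1.2 then -(1 / 3)
      else 0

namespace Stmt12Aux

variable {m n : ℕ} (G : Fin n → Finset (Fin m))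

/-- the vector `e_{p₁} - e_{p₂}` attached to a pair. -/
def uu (p : GPair G) (x : Fin m) : ℝ :=
  (if x = p.1.1 then 1 else 0) - (if x = p.1.2 then 1 else 0)

/-- the "inner product" pattern `δ_{p₁q₁} - δ_{p₁q₂} - δ_{p₂q₁} + δ_{p₂q₂}`. -/
def dd (p q : GPair G) : ℝ :=
  ((if p.1.1 = q.1.1 then (1:ℝ) else 0) - (if p.1.1 = q.1.2 then 1 else 0))
  - ((if p.1.2 = q.1.1 then (1:ℝ) else 0) - (if p.1.2 = q.1.2 then 1 else 0))

/-- size of the group containing `x` (0 if none). -/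
def KK (x : Fin m) : ℕ := ∑ g, if x ∈ G g then (G g).card else 0

/-- The candidate inverse matrix. -/
noncomputable def Ninv : Matrix (Unit ⊕ GPair G) (Unit ⊕ GPair G) ℝ := fun a b =>
  match a, b with
  | Sum.inl _, Sum.inl _ => 1
  | Sum.inl _, Sum.inr _ => 0
  | Sum.inr _, Sum.inl _ => 0
  | Sum.inr q, Sum.inr r =>
      (if q = r then 3 else 0) - 3 * dd G q r / (KK G r.1.1 + 1)

variable {G}

lemma grp_unique (hdisj : ∀ g h : Fin n, g ≠ h → Disjoint (G g) (G h))
    {x : Fin m} {g g' : Fin n} (h : x ∈ G g) (h' : x ∈ G g') : g = g' := by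
  by_contra hne
  exact (Finset.disjoint_left.mp (hdisj g g' hne) h) h'

lemma KK_eq (hdisj : ∀ g h : Fin n, g ≠ h → Disjoint (G g) (G h))
    {x : Fin m} {g : Fin n} (h : x ∈ G g) : KK G x = (G g).card := by
  unfold KK
  rw [Finset.sum_eq_single g]
  · simp [h]
  · intro g' _ hgg'
    have : x ∉ G g' := fun hx => hgg' (grp_unique hdisj hx h)
    simp [this]
  · simp [h]

lemma dd_eq_sum_uu (p q : GPair G) : dd G p q = ∑ x, uu G p x * uu G q x := by
  unfold dd uu
  simp only [sub_mul, mul_sub, Finset.sum_sub_distrib, ite_mul, one_mul, zero_mul,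
    Finset.sum_ite_eq', Finset.mem_univ, if_true]
  ring

lemma sum_uu_grp (p : GPair G)
    (hdisj : ∀ g h : Fin n, g ≠ h → Disjoint (G g) (G h)) (g : Fin n) :
    ∑ x, uu G p x * (if x ∈ G g then (1:ℝ) else 0) = 0 := by
  obtain ⟨hlt, h, h1, h2⟩ := p.2
  unfold uu
  simp only [sub_mul, ite_mul, one_mul, zero_mul, Finset.sum_sub_distrib,
    Finset.sum_ite_eq', Finset.mem_univ, if_true]
  by_cases hg : g = h
  · subst hg; simp [h1, h2]
  · have e1 : (p : Fin m × Fin m).1 ∉ G g := fun hx => hg (grp_unique hdisj hx h1)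
    have e2 : (p : Fin m × Fin m).2 ∉ G g := fun hx => hg (grp_unique hdisj hx h2)
    simp [e1, e2]

lemma sum_gpair (F : Fin m × Fin m → ℝ) :
    ∑ q : GPair G, F q.1
      = ∑ a, ∑ b, if (a < b ∧ ∃ g, a ∈ G g ∧ b ∈ G g) then F (a, b) else 0 := by
  rw [← Finset.sum_subtype
    (Finset.univ.filter (fun p : Fin m × Fin m => p.1 < p.2 ∧ ∃ g, p.1 ∈ G g ∧ p.2 ∈ G g))
    (by simp) F]
  rw [Finset.sum_filter, Fintype.sum_prod_type]

lemma count_lt (s : Finset (Fin m)) {x : Fin m} (hx : x ∈ s) :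
    (∑ b : Fin m, if (x < b ∧ b ∈ s) then (1:ℝ) else 0)
      + (∑ a : Fin m, if (a < x ∧ a ∈ s) then (1:ℝ) else 0)
      = (s.card : ℝ) - 1 := by
  have key : ∀ b : Fin m,
      (if (x < b ∧ b ∈ s) then (1:ℝ) else 0) + (if (b < x ∧ b ∈ s) then 1 else 0)
        + (if b = x then 1 else 0) = if b ∈ s then 1 else 0 := by
    intro b
    by_cases hb : b = x
    · subst hb; simp [hx, lt_irrefl]
    · rcases lt_trichotomy x b with h|h|h
      · simp [h, lt_asymm h, hb]
      · exact absurd h.symm hb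
      · simp [h, lt_asymm h, hb]
  have hsum : (∑ b : Fin m, ((if (x < b ∧ b ∈ s) then (1:ℝ) else 0)
      + (if (b < x ∧ b ∈ s) then 1 else 0) + (if b = x then 1 else 0)))
      = (s.card : ℝ) := by
    rw [Finset.sum_congr rfl (fun b _ => key b)]
    rw [Finset.sum_ite_mem, Finset.univ_inter, Finset.sum_const, nsmul_eq_mul, mul_one]
  rw [Finset.sum_add_distrib, Finset.sum_add_distrib] at hsum
  simp only [Finset.sum_ite_eq', Finset.mem_univ, if_true] at hsum
  linarith

lemma count_pairs (s : Finset (Fin m)) :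
    (∑ a : Fin m, ∑ b : Fin m, if (a < b ∧ a ∈ s ∧ b ∈ s) then (1:ℝ) else 0)
      = (s.card : ℝ) * ((s.card : ℝ) - 1) / 2 := by
  have key : ∀ a b : Fin m,
      (if (a < b ∧ a ∈ s ∧ b ∈ s) then (1:ℝ) else 0)
        + (if (b < a ∧ b ∈ s ∧ a ∈ s) then 1 else 0)
        + (if (a = b ∧ a ∈ s) then 1 else 0)
      = (if a ∈ s then (1:ℝ) else 0) * (if b ∈ s then 1 else 0) := by
    intro a b
    rcases lt_trichotomy a b with h|h|h
    · simp only [h, true_and, ne_of_lt h, lt_asymm h, false_and, if_false, add_zero, zero_add]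
      by_cases ha : a ∈ s <;> by_cases hb : b ∈ s <;> simp [ha, hb]
    · subst h; simp [lt_irrefl]
    · simp only [h, true_and, ne_of_gt h, lt_asymm h, false_and, if_false, add_zero, zero_add]
      by_cases ha : a ∈ s <;> by_cases hb : b ∈ s <;> simp [ha, hb, And.comm]
  have hsum : (∑ a : Fin m, ∑ b : Fin m,
      ((if (a < b ∧ a ∈ s ∧ b ∈ s) then (1:ℝ) else 0)
        + (if (b < a ∧ b ∈ s ∧ a ∈ s) then 1 else 0)
        + (if (a = b ∧ a ∈ s) then 1 else 0)))
      = (s.card : ℝ) * s.card := by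
    rw [Finset.sum_congr rfl (fun a _ => Finset.sum_congr rfl (fun b _ => key a b))]
    rw [← Finset.sum_mul_sum]
    rw [Finset.sum_ite_mem, Finset.univ_inter, Finset.sum_const, nsmul_eq_mul, mul_one]
  simp only [Finset.sum_add_distrib] at hsum
  have h2 : (∑ a : Fin m, ∑ b : Fin m, if (b < a ∧ b ∈ s ∧ a ∈ s) then (1:ℝ) else 0)
      = ∑ a : Fin m, ∑ b : Fin m, if (a < b ∧ a ∈ s ∧ b ∈ s) then (1:ℝ) else 0 := by
    rw [Finset.sum_comm]
  have h3 : (∑ a : Fin m, ∑ b : Fin m, if (a = b ∧ a ∈ s) then (1:ℝ) else 0)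
      = (s.card : ℝ) := by
    have e : ∀ a : Fin m, (∑ b : Fin m, if (a = b ∧ a ∈ s) then (1:ℝ) else 0)
        = if a ∈ s then 1 else 0 := by
      intro a
      by_cases ha : a ∈ s <;> simp [ha, Finset.sum_ite_eq]
    rw [Finset.sum_congr rfl (fun a _ => e a)]
    rw [Finset.sum_ite_mem, Finset.univ_inter, Finset.sum_const, nsmul_eq_mul, mul_one]
  rw [h2, h3] at hsum
  linarith

lemma E_eq (hdisj : ∀ g h : Fin n, g ≠ h → Disjoint (G g) (G h)) (x y : Fin m) :
    (∑ g, (if x ∈ G g then (1:ℝ) else 0) * (if y ∈ G g then 1 else 0))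
      = if (∃ g, x ∈ G g ∧ y ∈ G g) then 1 else 0 := by
  by_cases hE : ∃ g, x ∈ G g ∧ y ∈ G g
  · obtain ⟨g0, hx, hy⟩ := hE
    rw [Finset.sum_eq_single g0]
    · simp only [hx, hy, if_true, mul_one]
      rw [if_pos ⟨g0, hx, hy⟩]
    · intro g' _ hgg'
      have : x ∉ G g' := fun h => hgg' (grp_unique hdisj h hx)
      simp [this]
    · simp [hx, hy]
  · rw [if_neg hE]
    apply Finset.sum_eq_zero
    intro g _
    by_cases hx : x ∈ G g
    · by_cases hy : y ∈ G g
      · exact absurd ⟨g, hx, hy⟩ hE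
      · simp [hy]
    · simp [hx]

lemma S_lemma (hdisj : ∀ g h : Fin n, g ≠ h → Disjoint (G g) (G h))
    (hcover : ∀ x : Fin m, ∃ g, x ∈ G g) (x y : Fin m) :
    ∑ q : GPair G, uu G q x * uu G q y
      = (if x = y then (KK G x : ℝ) else 0)
        - ∑ g, (if x ∈ G g then (1:ℝ) else 0) * (if y ∈ G g then 1 else 0) := by
  have hrw : (∑ q : GPair G, uu G q x * uu G q y)
      = ∑ q : GPair G, (fun p : Fin m × Fin m =>
          ((if x = p.1 then (1:ℝ) else 0) - if x = p.2 then 1 else 0)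
          * ((if y = p.1 then (1:ℝ) else 0) - if y = p.2 then 1 else 0)) q.1 := rfl
  rw [hrw, sum_gpair (G := G) (fun p : Fin m × Fin m =>
    ((if x = p.1 then (1:ℝ) else 0) - if x = p.2 then 1 else 0)
    * ((if y = p.1 then (1:ℝ) else 0) - if y = p.2 then 1 else 0)), E_eq hdisj]
  clear hrw
  by_cases hxy : x = y
  · subst hxy
    obtain ⟨g0, hx0⟩ := hcover x
    have key : ∀ a b : Fin m,
        (if (a < b ∧ ∃ g, a ∈ G g ∧ b ∈ G g) then
            ((if x = a then (1:ℝ) else 0) - if x = b then 1 else 0)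
            * ((if x = a then (1:ℝ) else 0) - if x = b then 1 else 0) else 0)
        = (if a = x then (if (x < b ∧ ∃ g, x ∈ G g ∧ b ∈ G g) then (1:ℝ) else 0) else 0)
          + (if b = x then (if (a < x ∧ ∃ g, a ∈ G g ∧ x ∈ G g) then (1:ℝ) else 0) else 0) := by
      intro a b
      by_cases ha : a = x <;> by_cases hb : b = x
      · subst ha; subst hb; simp [lt_irrefl]
      · subst ha
        have h1 : a ≠ b := fun h => hb h.symm
        simp [h1, hb]
      · subst hb
        have h1 : b ≠ a := fun h => ha h.symm
        simp [h1, ha]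
      · have h1 : x ≠ a := fun h => ha h.symm
        have h2 : x ≠ b := fun h => hb h.symm
        simp [h1, h2, ha, hb]
    rw [Finset.sum_congr rfl (fun a _ => Finset.sum_congr rfl (fun b _ => key a b))]
    simp only [Finset.sum_add_distrib]
    have e1 : (∑ a : Fin m, ∑ b : Fin m,
        (if a = x then (if (x < b ∧ ∃ g, x ∈ G g ∧ b ∈ G g) then (1:ℝ) else 0) else 0))
        = ∑ b : Fin m, (if (x < b ∧ ∃ g, x ∈ G g ∧ b ∈ G g) then (1:ℝ) else 0) := by
      rw [Finset.sum_comm]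
      simp [Finset.sum_ite_eq']
    have e2 : (∑ a : Fin m, ∑ b : Fin m,
        (if b = x then (if (a < x ∧ ∃ g, a ∈ G g ∧ x ∈ G g) then (1:ℝ) else 0) else 0))
        = ∑ a : Fin m, (if (a < x ∧ ∃ g, a ∈ G g ∧ x ∈ G g) then (1:ℝ) else 0) := by
      simp [Finset.sum_ite_eq']
    rw [e1, e2]
    have m1 : ∀ b : Fin m, (∃ g, x ∈ G g ∧ b ∈ G g) ↔ b ∈ G g0 := by
      intro b
      constructor
      · rintro ⟨g, h1, h2⟩; rwa [grp_unique hdisj h1 hx0] at h2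
      · exact fun h => ⟨g0, hx0, h⟩
    have m2 : ∀ a : Fin m, (∃ g, a ∈ G g ∧ x ∈ G g) ↔ a ∈ G g0 := by
      intro a
      constructor
      · rintro ⟨g, h1, h2⟩; rwa [grp_unique hdisj h2 hx0] at h1
      · exact fun h => ⟨g0, h, hx0⟩
    simp only [m1, m2]
    rw [count_lt (G g0) hx0]
    have hEx : (∃ g, x ∈ G g ∧ x ∈ G g) := ⟨g0, hx0, hx0⟩
    simp [hEx, KK_eq hdisj hx0, hx0]
  · have hyx : y ≠ x := fun h => hxy h.symm
    have key : ∀ a b : Fin m,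
        (if (a < b ∧ ∃ g, a ∈ G g ∧ b ∈ G g) then
            ((if x = a then (1:ℝ) else 0) - if x = b then 1 else 0)
            * ((if y = a then (1:ℝ) else 0) - if y = b then 1 else 0) else 0)
        = (if a = x then (if b = y then
              (if (x < y ∧ ∃ g, x ∈ G g ∧ y ∈ G g) then (-1:ℝ) else 0) else 0) else 0)
          + (if a = y then (if b = x then
              (if (y < x ∧ ∃ g, y ∈ G g ∧ x ∈ G g) then (-1:ℝ) else 0) else 0) else 0) := by
      intro a b
      by_cases h1 : a = x ∧ b = y
      · obtain ⟨ha, hb⟩ := h1; subst ha; subst hb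
        simp [hxy, hyx]
      · by_cases h2 : a = y ∧ b = x
        · obtain ⟨ha, hb⟩ := h2; subst ha; subst hb
          simp [hxy, hyx]
        · have hz : ((if x = a then (1:ℝ) else 0) - if x = b then 1 else 0)
              * ((if y = a then (1:ℝ) else 0) - if y = b then 1 else 0) = 0 := by
            by_cases hxa : x = a <;> by_cases hxb : x = b <;>
              by_cases hya : y = a <;> by_cases hyb : y = b <;> simp_all
          rw [hz]
          have e1 : ¬(a = x ∧ b = y) := h1
          have e2 : ¬(a = y ∧ b = x) := h2
          simp only [ite_self]
          by_cases hax : a = x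
          · subst hax
            have : b ≠ y := fun h => h1 ⟨rfl, h⟩
            simp [this, hxy]
          · by_cases hay : a = y
            · subst hay
              have : b ≠ x := fun h => h2 ⟨rfl, h⟩
              simp [this, hax]
            · simp [hax, hay]
    rw [Finset.sum_congr rfl (fun a _ => Finset.sum_congr rfl (fun b _ => key a b))]
    simp only [Finset.sum_add_distrib, Finset.sum_ite_eq', Finset.mem_univ, if_true]
    have hsg : (∃ g, y ∈ G g ∧ x ∈ G g) ↔ (∃ g, x ∈ G g ∧ y ∈ G g) :=
      exists_congr fun g => and_comm
    rw [if_neg hxy]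
    rcases lt_trichotomy x y with h|h|h
    · simp only [h, lt_asymm h, false_and, if_false, true_and, hsg, add_zero]
      by_cases hS : ∃ g, x ∈ G g ∧ y ∈ G g <;> simp [hS]
    · exact absurd h hxy
    · simp only [h, lt_asymm h, false_and, if_false, hsg]
      by_cases hS : ∃ g, x ∈ G g ∧ y ∈ G g <;> simp [hS, h]

lemma key_lemma (hdisj : ∀ g h : Fin n, g ≠ h → Disjoint (G g) (G h))
    (hcover : ∀ x : Fin m, ∃ g, x ∈ G g) (p r : GPair G) :
    ∑ q : GPair G, dd G p q * dd G q r = (KK G r.1.1 : ℝ) * dd G p r := by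
  have h1 : ∀ q : GPair G, dd G p q * dd G q r
      = ∑ x, ∑ y, uu G p x * uu G r y * (uu G q x * uu G q y) := by
    intro q
    rw [dd_eq_sum_uu p q, dd_eq_sum_uu q r, Finset.sum_mul_sum]
    exact Finset.sum_congr rfl fun x _ => Finset.sum_congr rfl fun y _ => by ring
  rw [Finset.sum_congr rfl fun q _ => h1 q, Finset.sum_comm]
  have h2 : ∀ x, (∑ q : GPair G, ∑ y, uu G p x * uu G r y * (uu G q x * uu G q y))
      = ∑ y, uu G p x * uu G r y * ∑ q : GPair G, uu G q x * uu G q y := by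
    intro x; rw [Finset.sum_comm]
    exact Finset.sum_congr rfl fun y _ => by rw [Finset.mul_sum]
  rw [Finset.sum_congr rfl fun x _ => h2 x]
  have h3 : ∀ x y, uu G p x * uu G r y * (∑ q : GPair G, uu G q x * uu G q y)
      = uu G p x * uu G r y * (if x = y then (KK G x : ℝ) else 0)
        - ∑ g, (uu G p x * (if x ∈ G g then (1:ℝ) else 0))
            * (uu G r y * (if y ∈ G g then 1 else 0)) := by
    intro x y
    rw [S_lemma hdisj hcover x y, mul_sub, Finset.mul_sum]
    congr 1
    exact Finset.sum_congr rfl fun g _ => by ring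
  rw [Finset.sum_congr rfl fun x _ => Finset.sum_congr rfl fun y _ => h3 x y]
  simp only [Finset.sum_sub_distrib]
  have hA : (∑ x, ∑ y, uu G p x * uu G r y * (if x = y then (KK G x:ℝ) else 0))
      = (KK G r.1.1 : ℝ) * dd G p r := by
    have e : ∀ x, (∑ y, uu G p x * uu G r y * (if x = y then (KK G x:ℝ) else 0))
        = (KK G r.1.1 : ℝ) * (uu G p x * uu G r x) := by
      intro x
      rw [Finset.sum_eq_single x]
      · rw [if_pos rfl]
        by_cases hx1 : x = r.1.1
        · subst hx1; ring
        · by_cases hx2 : x = r.1.2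
          · subst hx2
            obtain ⟨g, hg1, hg2⟩ := r.2.2
            rw [KK_eq hdisj hg2, ← KK_eq hdisj hg1]
            ring
          · have hz : uu G r x = 0 := by simp [uu, hx1, hx2]
            rw [hz]; ring
      · intro y _ hyx; simp [Ne.symm hyx]
      · simp
    rw [Finset.sum_congr rfl fun x _ => e x, ← Finset.mul_sum, ← dd_eq_sum_uu]
  have hB : (∑ x, ∑ y, ∑ g, (uu G p x * (if x ∈ G g then (1:ℝ) else 0))
      * (uu G r y * (if y ∈ G g then 1 else 0))) = 0 := by
    apply Finset.sum_eq_zero; intro x _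
    rw [Finset.sum_comm]
    apply Finset.sum_eq_zero; intro g _
    rw [← Finset.mul_sum, sum_uu_grp r hdisj g, mul_zero]
  rw [hA, hB, sub_zero]

lemma Mentry (p q : GPair G) :
    Mmom G (Sum.inr p) (Sum.inr q) = (dd G p q + if p = q then 1 else 0) / 3 := by
  have hp : p.1.1 < p.1.2 := p.2.1
  have hq : q.1.1 < q.1.2 := q.2.1
  show (if p = q then (1:ℝ)
      else if p.1.1 = q.1.1 ∨ p.1.2 = q.1.2 then 1/3
      else if p.1.2 = q.1.1 ∨ p.1.1 = q.1.2 then -(1/3) else 0) = _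
  by_cases hpq : p = q
  · subst hpq
    have h1 : p.1.1 ≠ p.1.2 := ne_of_lt hp
    rw [if_pos rfl, if_pos rfl]
    simp [dd, h1, Ne.symm h1]
    norm_num
  · rw [if_neg hpq, if_neg hpq, add_zero]
    have hne : ¬(p.1.1 = q.1.1 ∧ p.1.2 = q.1.2) := by
      rintro ⟨h1, h2⟩
      exact hpq (Subtype.ext (Prod.ext h1 h2))
    by_cases c1 : p.1.1 = q.1.1 ∨ p.1.2 = q.1.2
    · rw [if_pos c1]
      rcases c1 with h | h
      · have e2 : p.1.2 ≠ q.1.2 := fun h2 => hne ⟨h, h2⟩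
        have e3 : p.1.1 ≠ q.1.2 := h ▸ ne_of_lt hq
        have e4 : p.1.2 ≠ q.1.1 := Ne.symm (h ▸ ne_of_lt hp)
        simp [dd, h, e2, e3, e4, ne_of_lt hq, ne_of_gt hq, ne_of_lt hp, ne_of_gt hp]
      · have e1 : p.1.1 ≠ q.1.1 := fun h1 => hne ⟨h1, h⟩
        have e3 : p.1.1 ≠ q.1.2 := h ▸ ne_of_lt hp
        have e4 : p.1.2 ≠ q.1.1 := Ne.symm (h ▸ ne_of_lt hq)
        simp [dd, h, e1, e3, e4, ne_of_lt hq, ne_of_gt hq, ne_of_lt hp, ne_of_gt hp]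
    · rw [if_neg c1]
      push_neg at c1
      obtain ⟨e1, e2⟩ := c1
      by_cases c2 : p.1.2 = q.1.1 ∨ p.1.1 = q.1.2
      · rw [if_pos c2]
        rcases c2 with h | h
        · have e3 : p.1.1 ≠ q.1.2 := ne_of_lt (lt_trans hp (h ▸ hq))
          simp [dd, h, e1, e2, e3, ne_of_lt hq, ne_of_gt hq, ne_of_lt hp, ne_of_gt hp]
          norm_num
        · have e4 : p.1.2 ≠ q.1.1 := Ne.symm (ne_of_lt (lt_trans hq (h ▸ hp)))
          simp [dd, h, e1, e2, e4, ne_of_lt hq, ne_of_gt hq, ne_of_lt hp, ne_of_gt hp]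
          norm_num
      · rw [if_neg c2]
        push_neg at c2
        obtain ⟨e3, e4⟩ := c2
        simp [dd, e1, e2, e3, e4]

lemma mul_Ninv (hdisj : ∀ g h : Fin n, g ≠ h → Disjoint (G g) (G h))
    (hcover : ∀ x : Fin m, ∃ g, x ∈ G g) :
    Mmom G * Ninv G = 1 := by
  ext a b
  rw [Matrix.mul_apply, Fintype.sum_sum_type]
  cases a with
  | inl u =>
    cases b with
    | inl v => simp [Mmom, Ninv, Matrix.one_apply]
    | inr r => simp [Mmom, Ninv, Matrix.one_apply]
  | inr p =>
    cases b with
    | inl v => simp [Mmom, Ninv, Matrix.one_apply]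
    | inr r =>
      have h0 : ∀ u : Unit, Mmom G (Sum.inr p) (Sum.inl u) * Ninv G (Sum.inl u) (Sum.inr r) = 0 := by
        intro u; simp [Mmom, Ninv]
      set c : ℝ := (KK G r.1.1 : ℝ) + 1 with hc
      have hcpos : (0:ℝ) < c := by positivity
      have hcne : c ≠ 0 := ne_of_gt hcpos
      have hterm : ∀ q : GPair G,
          Mmom G (Sum.inr p) (Sum.inr q) * Ninv G (Sum.inr q) (Sum.inr r)
          = (if q = r then (1:ℝ) else 0) * (dd G p q + (if p = q then (1:ℝ) else 0))
            - (dd G p q * dd G q r) / c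
            - (if p = q then (1:ℝ) else 0) * dd G q r / c := by
        intro q
        rw [Mentry]
        show (dd G p q + if p = q then 1 else 0) / 3
            * ((if q = r then 3 else 0) - 3 * dd G q r / c) = _
        have h3 : (if q = r then (3:ℝ) else 0) = 3 * (if q = r then 1 else 0) := by
          split_ifs <;> ring
        rw [h3]
        generalize (if q = r then (1:ℝ) else 0) = t1
        generalize (if p = q then (1:ℝ) else 0) = t2
        field_simp
        ring
      rw [Finset.sum_congr rfl fun u _ => h0 u,
        Finset.sum_congr rfl fun q _ => hterm q]
      simp only [Finset.sum_sub_distrib, ← Finset.sum_div, Finset.sum_const_zero, zero_add]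
      rw [key_lemma hdisj hcover p r]
      have s1 : (∑ q : GPair G, (if q = r then (1:ℝ) else 0)
            * (dd G p q + (if p = q then (1:ℝ) else 0)))
          = dd G p r + (if p = r then (1:ℝ) else 0) := by
        simp only [ite_mul, one_mul, zero_mul]
        rw [Finset.sum_ite_eq' Finset.univ r
          (fun q => dd G p q + (if p = q then (1:ℝ) else 0))]
        simp
      have s3 : (∑ q : GPair G, (if p = q then (1:ℝ) else 0) * dd G q r) = dd G p r := by
        simp only [ite_mul, one_mul, zero_mul]
        rw [Finset.sum_ite_eq Finset.univ p (fun q => dd G q r)]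
        simp
      rw [s1, s3]
      have hone : (1 : Matrix (Unit ⊕ GPair G) (Unit ⊕ GPair G) ℝ)
          (Sum.inr p) (Sum.inr r) = if p = r then 1 else 0 := by
        simp [Matrix.one_apply]
      rw [hone]
      generalize (if p = r then (1:ℝ) else 0) = t
      rw [hc]
      field_simp
      ring

end Stmt12Aux

open Stmt12Aux in
/-- `trace(M(ξ₀)⁻¹) = 1 + ∑_g 3|G_g|(|G_g|-1)²/(2(|G_g|+1))`. -/
theorem stmt12 (m n : ℕ) (G : Fin n → Finset (Fin m))
    (hdisj : ∀ g h : Fin n, g ≠ h → Disjoint (G g) (G h))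
    (hcover : ∀ x : Fin m, ∃ g, x ∈ G g)
    (hne : ∀ g, (G g).Nonempty) :
    Matrix.trace (Mmom G)⁻¹
      = 1 + ∑ g, 3 * ((G g).card : ℝ) * (((G g).card : ℝ) - 1) ^ 2
          / (2 * (((G g).card : ℝ) + 1)) := by
  rw [Matrix.inv_eq_right_inv (mul_Ninv hdisj hcover)]
  rw [Matrix.trace, Fintype.sum_sum_type]
  simp only [Matrix.diag_apply]
  have h1 : (∑ u : Unit, Ninv G (Sum.inl u) (Sum.inl u)) = 1 := by
    simp [Ninv]
  have hdiag : ∀ q : GPair G,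
      Ninv G (Sum.inr q) (Sum.inr q) = 3 - 6 / ((KK G q.1.1 : ℝ) + 1) := by
    intro q
    show (if q = q then (3:ℝ) else 0) - 3 * dd G q q / (KK G q.1.1 + 1) = _
    have h2 : dd G q q = 2 := by
      have hne' : q.1.1 ≠ q.1.2 := ne_of_lt q.2.1
      simp [dd, hne', Ne.symm hne']
      norm_num
    rw [if_pos rfl, h2]
    ring
  rw [h1, Finset.sum_congr rfl fun q _ => hdiag q]
  congr 1
  have hrw : (∑ q : GPair G, (3 - 6 / ((KK G q.1.1 : ℝ) + 1)))
      = ∑ q : GPair G, (fun p : Fin m × Fin m => 3 - 6 / ((KK G p.1 : ℝ) + 1)) q.1 := rfl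
  rw [hrw, sum_gpair (G := G) (fun p : Fin m × Fin m => 3 - 6 / ((KK G p.1 : ℝ) + 1))]
  have hsplit : ∀ a b : Fin m,
      (if (a < b ∧ ∃ g, a ∈ G g ∧ b ∈ G g) then (3 - 6 / ((KK G a : ℝ) + 1)) else 0)
      = ∑ g, if (a < b ∧ a ∈ G g ∧ b ∈ G g) then (3 - 6 / (((G g).card : ℝ) + 1)) else 0 := by
    intro a b
    by_cases hS : ∃ g, a ∈ G g ∧ b ∈ G g
    · obtain ⟨g0, hg1, hg2⟩ := hS
      rw [Finset.sum_eq_single g0]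
      · rw [KK_eq hdisj hg1]
        by_cases hab : a < b
        · rw [if_pos ⟨hab, g0, hg1, hg2⟩, if_pos ⟨hab, hg1, hg2⟩]
        · rw [if_neg (fun h => hab h.1), if_neg (fun h => hab h.1)]
      · intro g' _ hg'
        have hng : a ∉ G g' := fun h => hg' (grp_unique hdisj h hg1)
        exact if_neg (fun hcond => hng hcond.2.1)
      · intro h
        exact absurd (Finset.mem_univ g0) h
    · rw [if_neg (fun h => hS h.2)]
      symm
      apply Finset.sum_eq_zero
      intro g _
      exact if_neg (fun h => hS ⟨g, h.2⟩)
  rw [Finset.sum_congr rfl fun a _ => Finset.sum_congr rfl fun b _ => hsplit a b]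
  rw [Finset.sum_congr rfl fun (a : Fin m) _ => Finset.sum_comm]
  rw [Finset.sum_comm]
  apply Finset.sum_congr rfl
  intro g _
  have hc : ∀ a b : Fin m,
      (if (a < b ∧ a ∈ G g ∧ b ∈ G g) then (3 - 6 / (((G g).card : ℝ) + 1)) else 0)
      = (3 - 6 / (((G g).card : ℝ) + 1)) * (if (a < b ∧ a ∈ G g ∧ b ∈ G g) then 1 else 0) := by
    intro a b
    split_ifs <;> ring
  rw [Finset.sum_congr rfl fun a _ => Finset.sum_congr rfl fun b _ => hc a b]
  rw [Finset.sum_congr rfl fun (a : Fin m) _ => (Finset.mul_sum _ _ _).symm]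
  rw [← Finset.mul_sum, count_pairs (G g)]
  have hk : ((G g).card : ℝ) + 1 ≠ 0 := by positivity
  field_simp
  ring
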